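/- In the free Lie algebra FreeLieAlgebra ℚ Bool, let x := FreeLieAlgebra.of ℚ false and y := FreeLieAlgebra.of ℚ true. Then for all natural numbers p, q with 1 ≤ p and 1 ≤ q, the iterated bracket ((LieAlgebra.ad ℚ (FreeLieAlgebra ℚ Bool) x)^[p−1]) (((LieAlgebra.ad ℚ (FreeLieAlgebra ℚ Bool) y)^[q]) x) is nonzero; that is, the element [x,[x,…,[y,[y,…,[y,x]…]]]] with p−1 outer copies of x and q copies of y is not 0. -/

import Mathlib

attribute [local instance 100] LieRing.ofAssociativeRing

noncomputable def EE (n : ℕ) : Module.End ℚ (ℕ →₀ ℚ) :=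
  Finsupp.lsum ℚ (fun j => (j : ℚ) • Finsupp.lsingle (j + n))

lemma EE_single (n j : ℕ) (c : ℚ) :
    EE n (Finsupp.single j c) = (j : ℚ) • Finsupp.single (j + n) c := by
  simp [EE]

lemma EE_bracket (m n : ℕ) :
    ⁅EE m, EE n⁆ = ((n : ℚ) - m) • EE (n + m) := by
  rw [Ring.lie_def]
  apply Finsupp.lhom_ext
  intro j c
  simp only [LinearMap.sub_apply, Module.End.mul_apply, LinearMap.smul_apply,
    EE_single, map_smul]
  rw [show j + n + m = j + (n + m) by ring, show j + m + n = j + (n + m) by ring,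
    smul_smul, smul_smul, smul_smul, ← sub_smul]
  congr 1
  push_cast
  ring

lemma EE_ne_zero (n : ℕ) : EE n ≠ 0 := by
  intro h
  have := congrArg (fun f : Module.End ℚ (ℕ →₀ ℚ) => f (Finsupp.single 1 1)) h
  simp [EE_single, Finsupp.single_eq_zero] at this

lemma ad_EE (m k : ℕ) :
    LieAlgebra.ad ℚ (Module.End ℚ (ℕ →₀ ℚ)) (EE m) (EE k) = ((k : ℚ) - m) • EE (k + m) := by
  rw [LieAlgebra.ad_apply, EE_bracket]

lemma inner_iter (q : ℕ) :
    (⇑(LieAlgebra.ad ℚ (Module.End ℚ (ℕ →₀ ℚ)) (EE 2)))^[q] (EE 1)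
      = (∏ i ∈ Finset.range q, ((2 * i : ℚ) - 1)) • EE (1 + 2 * q) := by
  induction q with
  | zero => simp
  | succ q ih =>
    rw [Function.iterate_succ_apply', ih, map_smul, ad_EE, Finset.prod_range_succ,
      smul_smul, show 1 + 2 * q + 2 = 1 + 2 * (q + 1) by ring]
    congr 1
    push_cast
    ring

lemma outer_iter (n q : ℕ) (c : ℚ) :
    (⇑(LieAlgebra.ad ℚ (Module.End ℚ (ℕ →₀ ℚ)) (EE 1)))^[n] (c • EE (1 + 2 * q))
      = (c * ∏ i ∈ Finset.range n, ((2 * q + i : ℚ))) • EE (1 + 2 * q + n) := by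
  induction n with
  | zero => simp
  | succ n ih =>
    rw [Function.iterate_succ_apply', ih, map_smul, ad_EE, Finset.prod_range_succ,
      smul_smul, show 1 + 2 * q + n + 1 = 1 + 2 * q + (n + 1) by ring]
    congr 1
    push_cast
    ring

noncomputable def phi : FreeLieAlgebra ℚ Bool →ₗ⁅ℚ⁆ Module.End ℚ (ℕ →₀ ℚ) :=
  FreeLieAlgebra.lift ℚ (fun b => if b then EE 2 else EE 1)

lemma phi_ad_iter (k : ℕ) (a w : FreeLieAlgebra ℚ Bool) :
    phi ((⇑(LieAlgebra.ad ℚ (FreeLieAlgebra ℚ Bool) a))^[k] w)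
      = (⇑(LieAlgebra.ad ℚ (Module.End ℚ (ℕ →₀ ℚ)) (phi a)))^[k] (phi w) := by
  induction k with
  | zero => rfl
  | succ k ih =>
    rw [Function.iterate_succ_apply', Function.iterate_succ_apply', ← ih,
      LieAlgebra.ad_apply, LieAlgebra.ad_apply, LieHom.map_lie]

theorem stmt_12 (p q : ℕ) (hp : 1 ≤ p) (hq : 1 ≤ q) :
    (⇑(LieAlgebra.ad ℚ (FreeLieAlgebra ℚ Bool) (FreeLieAlgebra.of ℚ false)))^[p - 1]
      ((⇑(LieAlgebra.ad ℚ (FreeLieAlgebra ℚ Bool) (FreeLieAlgebra.of ℚ true)))^[q]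
        (FreeLieAlgebra.of ℚ false)) ≠ 0 := by
  intro h
  have hfalse : phi (FreeLieAlgebra.of ℚ false) = EE 1 := by
    simp [phi, FreeLieAlgebra.lift_of_apply]
  have htrue : phi (FreeLieAlgebra.of ℚ true) = EE 2 := by
    simp [phi, FreeLieAlgebra.lift_of_apply]
  have h2 := congrArg phi h
  rw [map_zero, phi_ad_iter, phi_ad_iter, hfalse, htrue, inner_iter,
    outer_iter] at h2
  have h3 : ((∏ i ∈ Finset.range q, ((2 * i : ℚ) - 1)) *
      ∏ i ∈ Finset.range (p - 1), ((2 * q + i : ℚ))) ≠ 0 := by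
    apply mul_ne_zero <;> apply Finset.prod_ne_zero_iff.mpr <;> intro i hi
    · intro hzero
      have h1 : (2 * i : ℚ) = 1 := by linarith
      have : (2 * i : ℕ) = 1 := by exact_mod_cast h1
      omega
    · positivity
  exact EE_ne_zero _ (by simpa [smul_eq_zero, h3] using h2)
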